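/- Let p ≥ 2 be an integer, U₁,…,U_p real numbers, and c₁,…,c_p positive reals with ∑_{i=1}^p c_i = 1. Let X be a random variable with discrete law ∑_{i=1}^p c_i δ_{U_i} and set c_min := min_{1≤i≤p} c_i. Then for every t ∈ ℝ, 1 − |E[e^{itX}]| ≥ (c_min²/π²) · ∑_{j=2}^p dist(t(U₁−U_j), 2πℤ)², where dist(·, 2πℤ) denotes the distance to the set 2πℤ. -/

import Mathlib

open MeasureTheory Real

/-- The distance from `x` to the set `2πℤ`. -/
noncomputable def dist2piZ (x : ℝ) : ℝ := ⨅ k : ℤ, |x - 2 * π * k|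

lemma dist2piZ_nonneg (x : ℝ) : 0 ≤ dist2piZ x :=
  le_ciInf fun k => abs_nonneg _

lemma dist2piZ_bdd (x : ℝ) : BddBelow (Set.range fun k : ℤ => |x - 2 * π * k|) :=
  ⟨0, by rintro y ⟨k, rfl⟩; exact abs_nonneg _⟩

lemma one_sub_cos_ge (θ : ℝ) : 2 / π ^ 2 * dist2piZ θ ^ 2 ≤ 1 - Real.cos θ := by
  set k : ℤ := round (θ / (2 * π)) with hk
  set x : ℝ := θ - 2 * π * k with hx
  have hπ : (0:ℝ) < π := Real.pi_pos
  have habs : |x| ≤ π := by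
    have h1 : |θ / (2 * π) - k| ≤ 1 / 2 := abs_sub_round _
    have h2 : θ / (2 * π) - k = x / (2 * π) := by field_simp [hx]; exact hx.symm
    rw [h2, abs_div, abs_of_pos (by linarith : (0:ℝ) < 2 * π)] at h1
    rw [div_le_div_iff₀ (by linarith) (by norm_num)] at h1
    linarith
  have hd : dist2piZ θ ≤ |x| := ciInf_le (dist2piZ_bdd θ) k
  have hcos : Real.cos θ = Real.cos x := by
    have : θ = x + k * (2 * π) := by rw [hx]; ring
    rw [this, Real.cos_add_int_mul_two_pi]
  have hkey : Real.cos x ≤ 1 - 2 / π ^ 2 * x ^ 2 := Real.cos_le_one_sub_mul_cos_sq habs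
  have hsq : dist2piZ θ ^ 2 ≤ x ^ 2 := by
    rw [← sq_abs x]
    exact pow_le_pow_left₀ (dist2piZ_nonneg θ) hd 2
  have hc : 2 / π ^ 2 * dist2piZ θ ^ 2 ≤ 2 / π ^ 2 * x ^ 2 :=
    mul_le_mul_of_nonneg_left hsq (by positivity)
  linarith [hcos ▸ hkey]

lemma norm_exp_mul_I (r s : ℝ) : ‖Complex.exp (r * s * Complex.I)‖ = 1 := by
  rw [show ((r:ℂ) * s) = ((r * s : ℝ) : ℂ) by push_cast; ring,
    Complex.norm_exp_ofReal_mul_I]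

theorem statement2
    (p : ℕ) (hp : 2 ≤ p) (U : Fin p → ℝ) (c : Fin p → ℝ)
    (hc : ∀ i, 0 < c i) (hsum : ∑ i, c i = 1) :
    ∀ t : ℝ,
      ((⨅ i, c i) ^ 2 / π ^ 2) *
          ∑ j ∈ Finset.univ.erase (⟨0, by omega⟩ : Fin p),
            dist2piZ (t * (U ⟨0, by omega⟩ - U j)) ^ 2
        ≤ 1 - ‖∫ x, Complex.exp (t * x * Complex.I)
              ∂(∑ i, ENNReal.ofReal (c i) • Measure.dirac (U i))‖ := by
  intro t
  have hπ : (0:ℝ) < π := Real.pi_pos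
  set i0 : Fin p := ⟨0, by omega⟩ with hi0
  set z : Fin p → ℂ := fun i => Complex.exp (t * U i * Complex.I) with hz
  -- integral computation
  have hint : (∫ x, Complex.exp (t * x * Complex.I)
      ∂(∑ i, ENNReal.ofReal (c i) • Measure.dirac (U i)))
      = ∑ i, (c i : ℂ) * z i := by
    rw [integral_finset_sum_measure ?_]
    · refine Finset.sum_congr rfl fun i _ => ?_
      rw [integral_smul_measure, integral_dirac, ENNReal.toReal_ofReal (hc i).le]
      simp [hz, Complex.real_smul]
    · intro i _
      refine Integrable.smul_measure ?_ ENNReal.ofReal_ne_top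
      refine Integrable.mono' (integrable_const 1) ?_ ?_
      · exact (Complex.continuous_exp.comp (by continuity)).aestronglyMeasurable
      · exact Filter.Eventually.of_forall fun x => le_of_eq (norm_exp_mul_I t x)
  rw [hint]
  set φ : ℂ := ∑ i, (c i : ℂ) * z i with hφ
  have hφle : ‖φ‖ ≤ 1 := by
    calc ‖φ‖ ≤ ∑ i, ‖(c i : ℂ) * z i‖ := norm_sum_le _ _
    _ = 1 := by
        rw [← hsum]
        refine Finset.sum_congr rfl fun i _ => ?_
        rw [norm_mul, hz]
        simp only []
        rw [norm_exp_mul_I, Complex.norm_real, Real.norm_of_nonneg (hc i).le, mul_one]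
  -- ‖φ‖² as double sum of cosines
  have expand : φ * (starRingEnd ℂ) φ
      = ∑ j, ∑ k, ((c j * c k : ℝ) : ℂ)
        * Complex.exp ((t * (U j - U k) : ℝ) * Complex.I) := by
    rw [hφ, map_sum, Finset.sum_mul_sum]
    refine Finset.sum_congr rfl fun j _ => Finset.sum_congr rfl fun k _ => ?_
    rw [map_mul, Complex.conj_ofReal]
    have hconj : (starRingEnd ℂ) (z k) = Complex.exp (-(t * U k * Complex.I)) := by
      rw [hz]
      simp only []
      rw [← Complex.exp_conj]
      congr 1
      simp [Complex.conj_I]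
    rw [hconj]
    have : z j * Complex.exp (-(t * U k * Complex.I))
        = Complex.exp ((t * (U j - U k) : ℝ) * Complex.I) := by
      rw [hz]
      simp only []
      rw [← Complex.exp_add]
      congr 1
      push_cast
      ring
    calc (c j : ℂ) * z j * ((c k : ℂ) * Complex.exp (-(t * U k * Complex.I)))
        = ((c j * c k : ℝ) : ℂ) * (z j * Complex.exp (-(t * U k * Complex.I))) := by
          push_cast; ring
      _ = _ := by rw [this]
  have hφsq : ‖φ‖ ^ 2 = ∑ j, ∑ k, c j * c k * Real.cos (t * (U j - U k)) := by
    have h1 : ‖φ‖ ^ 2 = (φ * (starRingEnd ℂ) φ).re := by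
      rw [Complex.mul_conj, Complex.sq_norm, Complex.ofReal_re]
    rw [h1, expand, Complex.re_sum]
    refine Finset.sum_congr rfl fun j _ => ?_
    rw [Complex.re_sum]
    refine Finset.sum_congr rfl fun k _ => ?_
    rw [Complex.re_ofReal_mul, Complex.exp_ofReal_mul_I_re]
  -- the double sum of c j c k equals 1
  have hone : ∑ j : Fin p, ∑ k : Fin p, c j * c k = 1 := by
    rw [← Finset.sum_mul_sum, hsum, one_mul]
  haveI : Nonempty (Fin p) := ⟨i0⟩
  set m : ℝ := ⨅ i, c i with hm
  have hmle : ∀ i, m ≤ c i := fun i => ciInf_le (Finite.bddBelow_range c) i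
  have hm0 : 0 ≤ m := le_ciInf fun i => (hc i).le
  set d : Fin p → ℝ := fun j => dist2piZ (t * (U i0 - U j)) with hd
  -- key sum bound
  have hterm : ∀ j : Fin p,
      2 * (m ^ 2 / π ^ 2) * d j ^ 2 ≤ c i0 * c j * (1 - Real.cos (t * (U i0 - U j))) := by
    intro j
    have h1 : 2 / π ^ 2 * d j ^ 2 ≤ 1 - Real.cos (t * (U i0 - U j)) := one_sub_cos_ge _
    have h2 : m * m ≤ c i0 * c j := mul_le_mul (hmle i0) (hmle j) hm0 (hc i0).le
    have h3 : 0 ≤ 2 / π ^ 2 * d j ^ 2 := mul_nonneg (by positivity) (sq_nonneg _)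
    calc 2 * (m ^ 2 / π ^ 2) * d j ^ 2 = (m * m) * (2 / π ^ 2 * d j ^ 2) := by ring
      _ ≤ (c i0 * c j) * (2 / π ^ 2 * d j ^ 2) := mul_le_mul_of_nonneg_right h2 h3
      _ ≤ (c i0 * c j) * (1 - Real.cos (t * (U i0 - U j))) :=
          mul_le_mul_of_nonneg_left h1 (mul_nonneg (hc i0).le (hc j).le)
  have hnn : ∀ j k : Fin p, 0 ≤ c j * c k * (1 - Real.cos (t * (U j - U k))) := by
    intro j k
    have h1 := Real.cos_le_one (t * (U j - U k))
    exact mul_nonneg (mul_nonneg (hc j).le (hc k).le) (by linarith)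
  have hbound : ∑ j ∈ Finset.univ.erase i0, 2 * (m ^ 2 / π ^ 2) * d j ^ 2
      ≤ 1 - ‖φ‖ ^ 2 := by
    have e1 : 1 - ‖φ‖ ^ 2
        = ∑ j, ∑ k, c j * c k * (1 - Real.cos (t * (U j - U k))) := by
      rw [hφsq]
      simp only [mul_sub, mul_one, Finset.sum_sub_distrib, hone]
    rw [e1]
    calc ∑ j ∈ Finset.univ.erase i0, 2 * (m ^ 2 / π ^ 2) * d j ^ 2
        ≤ ∑ j ∈ Finset.univ.erase i0, c i0 * c j * (1 - Real.cos (t * (U i0 - U j))) :=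
          Finset.sum_le_sum fun j _ => hterm j
      _ ≤ ∑ k, c i0 * c k * (1 - Real.cos (t * (U i0 - U k))) :=
          Finset.sum_le_sum_of_subset_of_nonneg (Finset.erase_subset _ _)
            (fun k _ _ => hnn i0 k)
      _ ≤ ∑ j, ∑ k, c j * c k * (1 - Real.cos (t * (U j - U k))) :=
          Finset.single_le_sum (f := fun j => ∑ k, c j * c k * (1 - Real.cos (t * (U j - U k))))
            (fun j _ => Finset.sum_nonneg fun k _ => hnn j k) (Finset.mem_univ i0)
  have hφ0 : 0 ≤ ‖φ‖ := norm_nonneg _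
  have hsum2 : ∑ j ∈ Finset.univ.erase i0, 2 * (m ^ 2 / π ^ 2) * d j ^ 2
      = 2 * ((m ^ 2 / π ^ 2) * ∑ j ∈ Finset.univ.erase i0, d j ^ 2) := by
    rw [Finset.mul_sum, Finset.mul_sum]
    exact Finset.sum_congr rfl fun j _ => by ring
  rw [hsum2] at hbound
  nlinarith [hbound]
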